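/- arXiv:1411.0209 — 3 statements merged into one kernel-verified Lean document; each statement's English description precedes it below -/
import Mathlib

section
/- Let {v_k} be nonnegative random variables with E[v_0] < ∞, and {α_k}, {μ_k} deterministic sequences with 0 ≤ α_k ≤ 1, μ_k ≥ 0, ∑ α_k = ∞, ∑ μ_k < ∞, μ_k/α_k → 0, and E[v_{k+1} | v_0,...,v_k] ≤ (1-α_k)v_k + μ_k almost surely for all k. Then v_k → 0 almost surely. -/
open MeasureTheory Filter


/-- Deterministic Chung-type lemma. -/
lemma chung_aux (u α c : ℕ → ℝ)
    (hu0 : ∀ k, 0 ≤ u k)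
    (hα0 : ∀ k, 0 ≤ α k) (hα1 : ∀ k, α k ≤ 1) (hc0 : ∀ k, 0 ≤ c k)
    (hαdiv : ¬ Summable α) (hcsum : Summable c)
    (hratio : Tendsto (fun k => c k / α k) atTop (nhds 0))
    (hrec : ∀ k, u (k + 1) ≤ (1 - α k) * u k + c k) :
    Tendsto u atTop (nhds 0) := by
  rw [Metric.tendsto_atTop]
  intro ε hε
  set ε' : ℝ := ε / 4 with hε'def
  have hε' : 0 < ε' := by positivity
  -- choose N₁ for the ratio condition
  obtain ⟨N₁, hN₁⟩ := (Metric.tendsto_atTop.1 hratio) ε' hε'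
  -- choose N₂ for the tail sum of c
  have htail : Tendsto (fun i => ∑' k, c (k + i)) atTop (nhds 0) :=
    tendsto_sum_nat_add c
  obtain ⟨N₂, hN₂⟩ := (Metric.tendsto_atTop.1 htail) ε' hε'
  set N := max N₁ N₂ with hNdef
  -- tail sums of c are small beyond N
  have hcsum' : ∀ i, Summable (fun k => c (k + i)) := fun i => (summable_nat_add_iff i).2 hcsum
  have htail_nonneg : ∀ i, 0 ≤ ∑' k, c (k + i) := fun i => tsum_nonneg (fun k => hc0 _)
  have htailN : ∑' k, c (k + N) < ε' := by
    have := hN₂ N (le_max_right _ _)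
    rwa [Real.dist_eq, abs_of_nonneg (by simpa using htail_nonneg N), sub_zero] at this
  -- beyond N, c k ≤ ε' * α k whenever α k ≠ 0
  have hckey : ∀ k, N ≤ k → α k ≠ 0 → c k ≤ ε' * α k := by
    intro k hk hαk
    have hαpos : 0 < α k := lt_of_le_of_ne (hα0 k) (Ne.symm hαk)
    have := hN₁ k (le_trans (le_max_left _ _) hk)
    rw [Real.dist_eq, sub_zero, abs_of_nonneg (div_nonneg (hc0 k) (hα0 k))] at this
    calc c k = (c k / α k) * α k := by field_simp
      _ ≤ ε' * α k := by nlinarith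
  -- define w and c'
  set w : ℕ → ℝ := fun k => max (u k - ε') 0 with hwdef
  have hw0 : ∀ k, 0 ≤ w k := fun k => le_max_right _ _
  set c' : ℕ → ℝ := fun k => if α k = 0 then c k else 0 with hc'def
  have hc'0 : ∀ k, 0 ≤ c' k := by
    intro k; simp only [hc'def]; split <;> [exact hc0 k; exact le_rfl]
  have hc'le : ∀ k, c' k ≤ c k := by
    intro k; simp only [hc'def]; split <;> [exact le_rfl; exact hc0 k]
  -- one-step recursion for w beyond N
  have hwrec : ∀ k, N ≤ k → w (k + 1) ≤ (1 - α k) * w k + c' k := by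
    intro k hk
    have h1α : 0 ≤ 1 - α k := by linarith [hα1 k]
    by_cases hαk : α k = 0
    · have : w (k + 1) ≤ w k + c k := by
        have := hrec k
        rw [hαk] at this
        simp only [hwdef]
        rcases le_or_gt (u (k+1)) ε' with h | h
        · have : max (u (k+1) - ε') 0 = 0 := max_eq_right (by linarith)
          rw [this]
          have : 0 ≤ max (u k - ε') 0 := le_max_right _ _
          linarith [hc0 k]
        · have h2 : max (u (k+1) - ε') 0 = u (k+1) - ε' := max_eq_left (by linarith)
          rw [h2]
          have : u (k+1) - ε' ≤ u k - ε' + c k := by linarith [this]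
          calc u (k+1) - ε' ≤ (u k - ε') + c k := this
            _ ≤ max (u k - ε') 0 + c k := by gcongr; exact le_max_left _ _
      simpa only [hc'def, hαk, if_pos rfl, ↓reduceIte, sub_zero, one_mul] using this
    · have hcε : c k ≤ ε' * α k := hckey k hk hαk
      have hrek : u (k + 1) - ε' ≤ (1 - α k) * (u k - ε') := by
        have := hrec k; nlinarith
      have : w (k + 1) ≤ (1 - α k) * w k := by
        simp only [hwdef]
        rcases le_or_gt (u (k+1)) ε' with h | h
        · rw [max_eq_right (by linarith)]; positivity
        · rw [max_eq_left (by linarith)]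
          calc u (k+1) - ε' ≤ (1 - α k) * (u k - ε') := hrek
            _ ≤ (1 - α k) * max (u k - ε') 0 := by gcongr; exact le_max_left _ _
      simpa only [hc'def, hαk, if_neg hαk, add_zero] using this
  -- iterate: w n ≤ (∏ (1-α)) * w N + ∑ c' over Ico N n
  have hiter : ∀ n, N ≤ n →
      w n ≤ (∏ j ∈ Finset.Ico N n, (1 - α j)) * w N + ∑ j ∈ Finset.Ico N n, c' j := by
    intro n hn
    induction n with
    | zero =>
        have : N = 0 := Nat.le_zero.1 hn
        simp [this]
    | succ m ih =>
        rcases Nat.lt_or_ge N (m + 1) with hlt | hge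
        · have hm : N ≤ m := Nat.lt_succ_iff.1 hlt
          have ihm := ih hm
          have h1α : 0 ≤ 1 - α m := by linarith [hα1 m]
          have hP : 0 ≤ ∏ j ∈ Finset.Ico N m, (1 - α j) :=
            Finset.prod_nonneg (fun j _ => by linarith [hα1 j])
          have hS : 0 ≤ ∑ j ∈ Finset.Ico N m, c' j :=
            Finset.sum_nonneg (fun j _ => hc'0 j)
          rw [Finset.prod_Ico_succ_top hm, Finset.sum_Ico_succ_top hm]
          calc w (m + 1) ≤ (1 - α m) * w m + c' m := hwrec m hm
            _ ≤ (1 - α m) * ((∏ j ∈ Finset.Ico N m, (1 - α j)) * w N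
                  + ∑ j ∈ Finset.Ico N m, c' j) + c' m := by
                gcongr
            _ ≤ (∏ j ∈ Finset.Ico N m, (1 - α j)) * (1 - α m) * w N
                  + (∑ j ∈ Finset.Ico N m, c' j + c' m) := by
                have h1 : (1 - α m) * (∑ j ∈ Finset.Ico N m, c' j)
                    ≤ ∑ j ∈ Finset.Ico N m, c' j := by nlinarith [hα0 m]
                nlinarith [mul_nonneg hP (hw0 N)]
        · have : N = m + 1 := le_antisymm hn hge
          simp [this]
  -- bound the c' sum by the tail sum
  have hc'sum : ∀ n, ∑ j ∈ Finset.Ico N n, c' j ≤ ∑' k, c (k + N) := by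
    intro n
    have h1 : ∑ j ∈ Finset.Ico N n, c' j ≤ ∑ j ∈ Finset.Ico N n, c j :=
      Finset.sum_le_sum (fun j _ => hc'le j)
    have h2 : ∑ j ∈ Finset.Ico N n, c j = ∑ i ∈ Finset.range (n - N), c (N + i) :=
      Finset.sum_Ico_eq_sum_range _ _ _
    have h3 : ∑ i ∈ Finset.range (n - N), c (N + i) ≤ ∑' k, c (k + N) := by
      have := (hcsum' N).sum_le_tsum (Finset.range (n - N))
        (fun k _ => hc0 _)
      calc ∑ i ∈ Finset.range (n - N), c (N + i)
          = ∑ i ∈ Finset.range (n - N), c (i + N) := by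
            apply Finset.sum_congr rfl; intro i _; rw [add_comm]
        _ ≤ ∑' k, c (k + N) := this
    linarith
  -- product bound by exponential
  have hprod : ∀ n, (∏ j ∈ Finset.Ico N n, (1 - α j))
      ≤ Real.exp (-(∑ j ∈ Finset.Ico N n, α j)) := by
    intro n
    calc ∏ j ∈ Finset.Ico N n, (1 - α j)
        ≤ ∏ j ∈ Finset.Ico N n, Real.exp (-(α j)) := by
          apply Finset.prod_le_prod (fun j _ => by linarith [hα1 j])
          intro j _
          have := Real.add_one_le_exp (-(α j))
          linarith
      _ = Real.exp (∑ j ∈ Finset.Ico N n, -(α j)) := (Real.exp_sum _ _).symm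
      _ = Real.exp (-(∑ j ∈ Finset.Ico N n, α j)) := by rw [Finset.sum_neg_distrib]
  -- partial sums of α tend to infinity
  have hαsum : Tendsto (fun n => ∑ j ∈ Finset.Ico N n, α j) atTop atTop := by
    have h1 : Tendsto (fun n => ∑ j ∈ Finset.range n, α j) atTop atTop :=
      (not_summable_iff_tendsto_nat_atTop_of_nonneg hα0).1 hαdiv
    have h2 : ∀ n, N ≤ n → ∑ j ∈ Finset.Ico N n, α j
        = ∑ j ∈ Finset.range n, α j - ∑ j ∈ Finset.range N, α j := by
      intro n hn
      rw [Finset.sum_Ico_eq_sub _ hn]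
    refine Tendsto.congr' ?_
      (tendsto_atTop_add_const_right _ (-(∑ j ∈ Finset.range N, α j)) h1)
    filter_upwards [eventually_ge_atTop N] with n hn
    rw [h2 n hn]; ring
  -- so the product term tends to 0
  have hPtend : Tendsto (fun n => (∏ j ∈ Finset.Ico N n, (1 - α j)) * w N) atTop (nhds 0) := by
    have hexp : Tendsto (fun n => Real.exp (-(∑ j ∈ Finset.Ico N n, α j))) atTop (nhds 0) :=
      Real.tendsto_exp_atBot.comp (tendsto_neg_atTop_atBot.comp hαsum)
    have hsq : Tendsto (fun n => (∏ j ∈ Finset.Ico N n, (1 - α j))) atTop (nhds 0) := by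
      apply squeeze_zero (fun n => Finset.prod_nonneg (fun j _ => by linarith [hα1 j]))
        hprod hexp
    simpa using hsq.mul_const (w N)
  obtain ⟨M, hM⟩ := (Metric.tendsto_atTop.1 hPtend) ε' hε'
  refine ⟨max N M, fun n hn => ?_⟩
  have hnN : N ≤ n := le_trans (le_max_left _ _) hn
  have hnM : M ≤ n := le_trans (le_max_right _ _) hn
  have h1 := hiter n hnN
  have h2 := hc'sum n
  have h3 := hM n hnM
  rw [Real.dist_eq, sub_zero] at h3
  have h4 : (∏ j ∈ Finset.Ico N n, (1 - α j)) * w N < ε' := lt_of_abs_lt h3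
  have h5 : w n < 3 * ε' := by linarith
  have h6 : u n < 4 * ε' := by
    have : u n - ε' ≤ w n := le_max_left _ _
    linarith
  rw [Real.dist_eq, sub_zero, abs_of_nonneg (hu0 n)]
  linarith


/-- Robbins–Siegmund type lemma: nonnegative random variables `v_k` with
`E[v_{k+1} | v_0,…,v_k] ≤ (1-α_k) v_k + μ_k` a.s., where `0 ≤ α_k ≤ 1`, `μ_k ≥ 0`,
`∑ α_k = ∞`, `∑ μ_k < ∞` and `μ_k/α_k → 0`, converge to `0` almost surely. -/
theorem robbins_siegmund_special
    {Ω : Type*} [MeasurableSpace Ω] (μ : Measure Ω) [IsProbabilityMeasure μ]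
    (v : ℕ → Ω → ℝ)
    (hmeas : ∀ k, Measurable (v k))
    (hnonneg : ∀ k, 0 ≤ᵐ[μ] v k)
    (hint : ∀ k, Integrable (v k) μ)
    (α c : ℕ → ℝ)
    (hα0 : ∀ k, 0 ≤ α k) (hα1 : ∀ k, α k ≤ 1) (hc0 : ∀ k, 0 ≤ c k)
    (hαdiv : ¬ Summable α) (hcsum : Summable c)
    (hratio : Tendsto (fun k => c k / α k) atTop (nhds 0))
    (hrec : ∀ k,
      μ[v (k + 1) |
          MeasurableSpace.comap (fun ω => (fun i : Fin (k + 1) => v i ω)) inferInstance]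
        ≤ᵐ[μ] fun ω => (1 - α k) * v k ω + c k) :
    ∀ᵐ ω ∂μ, Tendsto (fun k => v k ω) atTop (nhds 0) := by
  classical
  -- the filtration generated by `v 0, …, v k`
  have hfmeas : ∀ k, Measurable (fun ω => (fun i : Fin (k + 1) => v i ω)) :=
    fun k => measurable_pi_lambda _ (fun i => hmeas i)
  let ℱ : Filtration ℕ ‹MeasurableSpace Ω› :=
    { seq := fun k =>
        MeasurableSpace.comap (fun ω => (fun i : Fin (k + 1) => v i ω)) inferInstance
      mono' := by
        apply monotone_nat_of_le_succ
        intro k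
        have hcomp : (fun ω => (fun i : Fin (k + 1) => v i ω))
            = (fun x : Fin (k + 2) → ℝ => fun i : Fin (k + 1) => x i.castSucc)
              ∘ (fun ω => (fun i : Fin (k + 2) => v i ω)) := by
          funext ω i
          simp [Fin.coe_castSucc]
        have hr : Measurable (fun x : Fin (k + 2) → ℝ => fun i : Fin (k + 1) => x i.castSucc) :=
          measurable_pi_lambda _ (fun i => measurable_pi_apply _)
        calc MeasurableSpace.comap (fun ω => (fun i : Fin (k + 1) => v i ω)) inferInstance
            = MeasurableSpace.comap (fun ω => (fun i : Fin (k + 2) => v i ω))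
                (MeasurableSpace.comap
                  (fun x : Fin (k + 2) → ℝ => fun i : Fin (k + 1) => x i.castSucc)
                  inferInstance) := by
              rw [MeasurableSpace.comap_comp, ← hcomp]
          _ ≤ MeasurableSpace.comap (fun ω => (fun i : Fin (k + 2) => v i ω)) inferInstance :=
              MeasurableSpace.comap_mono hr.comap_le
      le' := fun k => (hfmeas k).comap_le }
  have hℱ : ∀ k, ℱ k
      = MeasurableSpace.comap (fun ω => (fun i : Fin (k + 1) => v i ω)) inferInstance :=
    fun k => rfl
  -- tail sums of c
  have hcsum' : ∀ i, Summable (fun j => c (j + i)) := fun i => (summable_nat_add_iff i).2 hcsum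
  set t : ℕ → ℝ := fun k => ∑' j, c (j + k) with htdef
  have ht0 : ∀ k, 0 ≤ t k := fun k => tsum_nonneg fun j => hc0 _
  have htrec : ∀ k, t k = c k + t (k + 1) := by
    intro k
    have h := Summable.tsum_eq_zero_add (hcsum' k)
    simp only [zero_add] at h
    rw [htdef]
    simp only
    rw [h]
    congr 1
    apply tsum_congr
    intro j
    congr 1
    omega
  have httend : Tendsto t atTop (nhds 0) := tendsto_sum_nat_add c
  have htanti : ∀ k, t (k + 1) ≤ t k := fun k => by linarith [htrec k, hc0 k]
  have htle : ∀ k, t k ≤ t 0 := fun k => antitone_nat_of_succ_le htanti (Nat.zero_le k)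
  -- the supermartingale X k = v k + t k
  set X : ℕ → Ω → ℝ := fun k ω => v k ω + t k with hXdef
  have hXint : ∀ k, Integrable (X k) μ := fun k => (hint k).add (integrable_const _)
  have hadp : StronglyAdapted ℱ X := by
    intro k
    have h1 : Measurable[ℱ k] (fun ω => (fun i : Fin (k + 1) => v i ω)) := by
      rw [hℱ k]
      exact Measurable.of_comap_le le_rfl
    have h2 : Measurable[ℱ k] (v k) := by
      have h3 := (measurable_pi_apply (Fin.last k)).comp h1
      have h4 : v k = (fun f : Fin (k + 1) → ℝ => f (Fin.last k))
          ∘ (fun ω => (fun i : Fin (k + 1) => v i ω)) := by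
        funext ω
        simp [Fin.last]
      rw [h4]
      exact h3
    exact (h2.add_const _).stronglyMeasurable
  have hXsm : Supermartingale X ℱ μ := by
    refine supermartingale_nat hadp hXint (fun k => ?_)
    have h1 : μ[X (k + 1)|ℱ k]
        =ᵐ[μ] μ[v (k + 1)|ℱ k] + μ[(fun _ => t (k + 1))|ℱ k] :=
      condExp_add (hint _) (integrable_const _) _
    have h2 : μ[(fun _ : Ω => t (k + 1))|ℱ k] = fun _ => t (k + 1) :=
      condExp_const (μ := μ) (ℱ.le k) (t (k + 1))
    have h3 := hrec k
    rw [← hℱ k] at h3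
    filter_upwards [h1, h3, hnonneg k] with ω hω1 hω2 hω3
    have : (μ[X (k + 1)|ℱ k]) ω = (μ[v (k + 1)|ℱ k]) ω + t (k + 1) := by
      rw [hω1]; simp [h2]
    rw [this]
    have hα : 0 ≤ α k * v k ω := mul_nonneg (hα0 k) hω3
    have := htrec k
    simp only [hXdef]
    nlinarith
  -- expectations
  set u : ℕ → ℝ := fun k => ∫ ω, v k ω ∂μ with hudef
  have hu0 : ∀ k, 0 ≤ u k := fun k => integral_nonneg_of_ae (hnonneg k)
  have hurec : ∀ k, u (k + 1) ≤ (1 - α k) * u k + c k := by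
    intro k
    have h3 := hrec k
    rw [← hℱ k] at h3
    have h1 : ∫ ω, (μ[v (k + 1)|ℱ k]) ω ∂μ = u (k + 1) :=
      integral_condExp (ℱ.le k)
    have h2 : ∫ ω, (μ[v (k + 1)|ℱ k]) ω ∂μ
        ≤ ∫ ω, ((1 - α k) * v k ω + c k) ∂μ :=
      integral_mono_ae integrable_condExp (((hint k).const_mul _).add (integrable_const _)) h3
    have h4 : ∫ ω, ((1 - α k) * v k ω + c k) ∂μ = (1 - α k) * u k + c k := by
      rw [integral_add ((hint k).const_mul _) (integrable_const _), integral_const_mul,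
        integral_const]
      simp [hudef]
    linarith
  have hutend : Tendsto u atTop (nhds 0) :=
    chung_aux u α c hu0 hα0 hα1 hc0 hαdiv hcsum hratio hurec
  -- L¹ boundedness of X
  obtain ⟨B, hB⟩ := hutend.bddAbove_range
  have hXbdd : ∀ n, eLpNorm (X n) 1 μ ≤ ENNReal.ofReal (B + t 0) := by
    intro n
    have hXnn : 0 ≤ᵐ[μ] X n := by
      filter_upwards [hnonneg n] with ω hω
      simp only [Pi.zero_apply] at hω
      simp only [hXdef]
      have := ht0 n
      dsimp
      linarith
    rw [eLpNorm_one_eq_lintegral_enorm]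
    have hcongr : ∫⁻ ω, ‖X n ω‖ₑ ∂μ = ∫⁻ ω, ENNReal.ofReal (X n ω) ∂μ := by
      apply lintegral_congr_ae
      filter_upwards [hXnn] with ω hω
      rw [Real.enorm_eq_ofReal hω]
    rw [hcongr, ← ofReal_integral_eq_lintegral_ofReal (hXint n) hXnn]
    apply ENNReal.ofReal_le_ofReal
    have hXi : ∫ ω, X n ω ∂μ = u n + t n := by
      simp only [hXdef]
      rw [integral_add (hint n) (integrable_const _), integral_const]
      simp [hudef]
    rw [hXi]
    have hun : u n ≤ B := hB ⟨n, rfl⟩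
    linarith [htle n]
  -- almost sure convergence of X via martingale convergence
  have hsub : Submartingale (-X) ℱ μ := hXsm.neg
  have hbdd' : ∀ n, eLpNorm ((-X) n) 1 μ ≤ ((((B + t 0).toNNReal) : NNReal) : ENNReal) := by
    intro n
    have : eLpNorm ((-X) n) 1 μ = eLpNorm (X n) 1 μ := eLpNorm_neg (X n) 1 μ
    rw [this]
    exact (hXbdd n).trans_eq rfl
  have hlim := hsub.ae_tendsto_limitProcess hbdd'
  set g := ℱ.limitProcess (-X) μ with hgdef
  have hgmeas : Measurable g := (Filtration.stronglyMeasurable_limit_process' (ℱ := ℱ) (f := -X)).measurable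
  have hvlim : ∀ᵐ ω ∂μ, Tendsto (fun n => v n ω) atTop (nhds (-g ω)) := by
    filter_upwards [hlim] with ω hω
    have h1 : Tendsto (fun n => X n ω) atTop (nhds (-g ω)) := by
      have := hω.neg
      simpa using this
    have h2 : Tendsto (fun n => X n ω - t n) atTop (nhds (-g ω - 0)) := h1.sub httend
    simp only [hXdef, add_sub_cancel_right, sub_zero] at h2
    exact h2
  have hL0 : ∀ᵐ ω ∂μ, 0 ≤ -g ω := by
    filter_upwards [hvlim, ae_all_iff.2 hnonneg] with ω h1 h2
    exact ge_of_tendsto h1 (Eventually.of_forall fun n => h2 n)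
  -- Fatou: the limit has zero integral
  have key : ∀ᵐ ω ∂μ, ENNReal.ofReal (-g ω) = 0 := by
    have hle : ∫⁻ ω, ENNReal.ofReal (-g ω) ∂μ
        ≤ liminf (fun n => ∫⁻ ω, ENNReal.ofReal (v n ω) ∂μ) atTop := by
      calc ∫⁻ ω, ENNReal.ofReal (-g ω) ∂μ
          = ∫⁻ ω, liminf (fun n => ENNReal.ofReal (v n ω)) atTop ∂μ := by
            apply lintegral_congr_ae
            filter_upwards [hvlim] with ω hω
            have htd : Tendsto (fun n => ENNReal.ofReal (v n ω)) atTop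
                (nhds (ENNReal.ofReal (-g ω))) :=
              (ENNReal.continuous_ofReal.tendsto _).comp hω
            exact htd.liminf_eq.symm
        _ ≤ liminf (fun n => ∫⁻ ω, ENNReal.ofReal (v n ω) ∂μ) atTop :=
            lintegral_liminf_le (fun n => ENNReal.measurable_ofReal.comp (hmeas n))
    have heq : ∀ n, ∫⁻ ω, ENNReal.ofReal (v n ω) ∂μ = ENNReal.ofReal (u n) :=
      fun n => (ofReal_integral_eq_lintegral_ofReal (hint n) (hnonneg n)).symm
    have hlim0 : Tendsto (fun n => ∫⁻ ω, ENNReal.ofReal (v n ω) ∂μ) atTop (nhds 0) := by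
      simp only [heq]
      have h5 := ENNReal.tendsto_ofReal (a := 0) hutend
      simpa using h5
    have h0 : ∫⁻ ω, ENNReal.ofReal (-g ω) ∂μ = 0 := by
      refine le_antisymm ?_ zero_le
      rw [← hlim0.liminf_eq]
      exact hle
    have := (lintegral_eq_zero_iff (ENNReal.measurable_ofReal.comp hgmeas.neg)).1 h0
    filter_upwards [this] with ω hω
    simpa using hω
  filter_upwards [hvlim, key, hL0] with ω h1 h2 h3
  have : -g ω = 0 := le_antisymm (ENNReal.ofReal_eq_zero.1 h2) h3
  rwa [this] at h1
end

section
/- Let X ⊂ ℝⁿ be closed, convex, bounded by M (‖x‖ ≤ M for x ∈ X), F: X' → ℝⁿ monotone on a set X' ⊇ X with ‖F‖ ≤ C on X', and F_k(x) = E[F(x+z_k)], F_{k-1}(x) = E[F(x+z_{k-1})] where z_k, z_{k-1} are uniform on balls B(0,ε_k), B(0,ε_{k-1}) with X + B(0,max ε) ⊆ X'. Let s_k, s_{k-1} be the unique solutions of VI(X, F_k + η_k I) and VI(X, F_{k-1} + η_{k-1} I) with η_k, η_{k-1} > 0. Then η_{k-1}‖s_k - s_{k-1}‖ ≤ ‖F_k(s_k)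 - F_{k-1}(s_k)‖ + M|η_{k-1} - η_k|. -/
/-- Bound on the distance between consecutive points of the regularized smoothed
Tikhonov trajectory: if `s_k` solves VI(X, F_k + η_k I) and `s_{k-1}` solves
VI(X, F_{k-1} + η_{k-1} I), where `F_k, F_{k-1}` are monotone on the set `X` bounded
by `M`, then `η_{k-1} ‖s_k - s_{k-1}‖ ≤ ‖F_k(s_k) - F_{k-1}(s_k)‖ + M |η_{k-1} - η_k|`. -/
theorem tikhonov_trajectory_consecutive_bound
    {n : ℕ} (X : Set (EuclideanSpace ℝ (Fin n)))
    (hXc : IsClosed X) (hXconv : Convex ℝ X)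
    (M : ℝ) (hM : ∀ x ∈ X, ‖x‖ ≤ M)
    (Fk Fk1 : EuclideanSpace ℝ (Fin n) → EuclideanSpace ℝ (Fin n))
    (hmonok : ∀ x ∈ X, ∀ y ∈ X, 0 ≤ (inner ℝ (x - y) (Fk x - Fk y) : ℝ))
    (hmonok1 : ∀ x ∈ X, ∀ y ∈ X, 0 ≤ (inner ℝ (x - y) (Fk1 x - Fk1 y) : ℝ))
    (ηk ηk1 : ℝ) (hηk : 0 < ηk) (hηk1 : 0 < ηk1)
    (sk sk1 : EuclideanSpace ℝ (Fin n)) (hsk : sk ∈ X) (hsk1 : sk1 ∈ X)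
    (hVIk : ∀ x ∈ X, 0 ≤ (inner ℝ (Fk sk + ηk • sk) (x - sk) : ℝ))
    (hVIk1 : ∀ x ∈ X, 0 ≤ (inner ℝ (Fk1 sk1 + ηk1 • sk1) (x - sk1) : ℝ)) :
    ηk1 * ‖sk - sk1‖ ≤ ‖Fk sk - Fk1 sk‖ + M * |ηk1 - ηk| := by
  have hMnn : 0 ≤ M := le_trans (norm_nonneg sk) (hM sk hsk)
  rcases eq_or_lt_of_le (norm_nonneg (sk - sk1)) with h0 | hpos
  · rw [← h0, mul_zero]
    positivity
  have h1 := hVIk sk1 hsk1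
  have h2 := hVIk1 sk hsk
  have hm := hmonok1 sk1 hsk1 sk hsk
  have key : ηk1 * ‖sk - sk1‖ ^ 2 ≤
      (inner ℝ (Fk sk - Fk1 sk) (sk1 - sk) : ℝ) + (ηk - ηk1) * (inner ℝ sk (sk1 - sk) : ℝ) := by
    have e1 : (inner ℝ (Fk sk + ηk • sk) (sk1 - sk) : ℝ)
        = (inner ℝ (Fk sk) (sk1 - sk) : ℝ) + ηk * (inner ℝ sk (sk1 - sk) : ℝ) := by
      rw [inner_add_left, real_inner_smul_left]
    have e2 : (inner ℝ (Fk1 sk1 + ηk1 • sk1) (sk - sk1) : ℝ)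
        = (inner ℝ (Fk1 sk1) (sk - sk1) : ℝ) + ηk1 * (inner ℝ sk1 (sk - sk1) : ℝ) := by
      rw [inner_add_left, real_inner_smul_left]
    have e3 : (inner ℝ (sk1 - sk) (Fk1 sk1 - Fk1 sk) : ℝ)
        = (inner ℝ (Fk1 sk1) (sk1 - sk) : ℝ) - (inner ℝ (Fk1 sk) (sk1 - sk) : ℝ) := by
      rw [real_inner_comm, inner_sub_left]
    have e4 : (inner ℝ (Fk sk - Fk1 sk) (sk1 - sk) : ℝ)
        = (inner ℝ (Fk sk) (sk1 - sk) : ℝ) - (inner ℝ (Fk1 sk) (sk1 - sk) : ℝ) := by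
      rw [inner_sub_left]
    have e5 : (inner ℝ sk1 (sk - sk1) : ℝ) = - (inner ℝ sk1 (sk1 - sk) : ℝ) := by
      rw [← inner_neg_right]; congr 1; abel
    have e6 : (inner ℝ (Fk1 sk1) (sk - sk1) : ℝ) = - (inner ℝ (Fk1 sk1) (sk1 - sk) : ℝ) := by
      rw [← inner_neg_right]; congr 1; abel
    have e7 : ‖sk - sk1‖ ^ 2 = (inner ℝ sk1 (sk1 - sk) : ℝ) - (inner ℝ sk (sk1 - sk) : ℝ) := by
      have h := real_inner_self_eq_norm_sq (sk - sk1)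
      rw [inner_sub_left] at h
      have a1 : (inner ℝ sk (sk - sk1) : ℝ) = - (inner ℝ sk (sk1 - sk) : ℝ) := by
        rw [← inner_neg_right]; congr 1; abel
      have a2 : (inner ℝ sk1 (sk - sk1) : ℝ) = - (inner ℝ sk1 (sk1 - sk) : ℝ) := by
        rw [← inner_neg_right]; congr 1; abel
      rw [a1, a2] at h
      linarith
    rw [e1] at h1
    rw [e2, e5, e6] at h2
    rw [e3] at hm
    rw [e4, e7]
    linarith
  have b1 : (inner ℝ (Fk sk - Fk1 sk) (sk1 - sk) : ℝ) ≤ ‖Fk sk - Fk1 sk‖ * ‖sk - sk1‖ := by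
    calc (inner ℝ (Fk sk - Fk1 sk) (sk1 - sk) : ℝ) ≤ ‖Fk sk - Fk1 sk‖ * ‖sk1 - sk‖ :=
          real_inner_le_norm _ _
      _ = ‖Fk sk - Fk1 sk‖ * ‖sk - sk1‖ := by rw [norm_sub_rev sk1 sk]
  have b2 : (ηk - ηk1) * (inner ℝ sk (sk1 - sk) : ℝ) ≤ M * |ηk1 - ηk| * ‖sk - sk1‖ := by
    calc (ηk - ηk1) * (inner ℝ sk (sk1 - sk) : ℝ)
        ≤ |(ηk - ηk1) * (inner ℝ sk (sk1 - sk) : ℝ)| := le_abs_self _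
      _ = |ηk1 - ηk| * |(inner ℝ sk (sk1 - sk) : ℝ)| := by
          rw [abs_mul, abs_sub_comm]
      _ ≤ |ηk1 - ηk| * (‖sk‖ * ‖sk1 - sk‖) :=
          mul_le_mul_of_nonneg_left (abs_real_inner_le_norm _ _) (abs_nonneg _)
      _ ≤ |ηk1 - ηk| * (M * ‖sk - sk1‖) := by
          apply mul_le_mul_of_nonneg_left _ (abs_nonneg _)
          rw [norm_sub_rev sk1 sk]
          exact mul_le_mul_of_nonneg_right (hM sk hsk) (norm_nonneg _)
      _ = M * |ηk1 - ηk| * ‖sk - sk1‖ := by ring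
  have hB : ηk1 * ‖sk - sk1‖ ^ 2 ≤ (‖Fk sk - Fk1 sk‖ + M * |ηk1 - ηk|) * ‖sk - sk1‖ := by
    calc ηk1 * ‖sk - sk1‖ ^ 2 ≤ _ := key
      _ ≤ ‖Fk sk - Fk1 sk‖ * ‖sk - sk1‖ + M * |ηk1 - ηk| * ‖sk - sk1‖ := add_le_add b1 b2
      _ = (‖Fk sk - Fk1 sk‖ + M * |ηk1 - ηk|) * ‖sk - sk1‖ := by ring
  nlinarith [hB, hpos]
end

section
/- Under the setup of the smoothed Tikhonov trajectory: let F be monotone and bounded by C on X^ε, F_k(x) = E[F(x+z_k)] with z_k uniform on B(0,ε_k), and s_k the unique solution of VI(X, F_k + η_k I). If ε_k ≤ ε_{k-1}, then ‖F_k(s_k) - F_{k-1}(s_k)‖ ≤ 2C(1 - (ε_k/ε_{k-1})ⁿ). -/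
open MeasureTheory

/-- Difference of consecutive smoothed maps: if `‖F‖ ≤ C` on the `ε`-enlargement of
`X`, and `F_j(x) = E[F(x + z_j)]` with `z_j` uniform on the ball `B(0, ε_j)`, then for
`0 < ε_k ≤ ε_{k-1} ≤ ε` and any `s ∈ X`,
`‖F_k(s) - F_{k-1}(s)‖ ≤ 2C (1 - (ε_k/ε_{k-1})ⁿ)`. -/
theorem smoothed_maps_difference_bound
    {n : ℕ} (hn : 0 < n)
    (X : Set (EuclideanSpace ℝ (Fin n)))
    (F : EuclideanSpace ℝ (Fin n) → EuclideanSpace ℝ (Fin n))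
    (C ε εk εk1 : ℝ) (hC : 0 < C)
    (hεk : 0 < εk) (hle : εk ≤ εk1) (hε : εk1 ≤ ε)
    (hFb : ∀ x ∈ X, ∀ z : EuclideanSpace ℝ (Fin n), ‖z‖ ≤ ε → ‖F (x + z)‖ ≤ C)
    (s : EuclideanSpace ℝ (Fin n)) (hs : s ∈ X)
    (hint : IntegrableOn (fun z => F (s + z)) (Metric.ball (0 : EuclideanSpace ℝ (Fin n)) εk1)) :
    ‖(volume (Metric.ball (0 : EuclideanSpace ℝ (Fin n)) εk)).toReal⁻¹
          • (∫ z in Metric.ball (0 : EuclideanSpace ℝ (Fin n)) εk, F (s + z))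
        - (volume (Metric.ball (0 : EuclideanSpace ℝ (Fin n)) εk1)).toReal⁻¹
          • (∫ z in Metric.ball (0 : EuclideanSpace ℝ (Fin n)) εk1, F (s + z))‖
      ≤ 2 * C * (1 - (εk / εk1) ^ n) := by
  haveI : Nontrivial (EuclideanSpace ℝ (Fin n)) :=
    Module.nontrivial_of_finrank_pos (R := ℝ)
      (by rw [finrank_euclideanSpace_fin]; exact hn)
  have hεk1 : 0 < εk1 := hεk.trans_le hle
  set Bk := Metric.ball (0 : EuclideanSpace ℝ (Fin n)) εk with hBk
  set B := Metric.ball (0 : EuclideanSpace ℝ (Fin n)) εk1 with hB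
  have hsub : Bk ⊆ B := Metric.ball_subset_ball hle
  set μk := (volume Bk).toReal with hμk
  set μ := (volume B).toReal with hμ
  have hμk_pos : 0 < μk :=
    ENNReal.toReal_pos (Metric.measure_ball_pos volume 0 hεk).ne' measure_ball_lt_top.ne
  have hμ_pos : 0 < μ :=
    ENNReal.toReal_pos (Metric.measure_ball_pos volume 0 hεk1).ne' measure_ball_lt_top.ne
  have hμk_le : μk ≤ μ := ENNReal.toReal_mono measure_ball_lt_top.ne (measure_mono hsub)
  have hintk : IntegrableOn (fun z => F (s + z)) Bk volume := hint.mono_set hsub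
  set Ik := ∫ z in Bk, F (s + z) with hIkdef
  set I := ∫ z in B, F (s + z) with hIdef
  have hdiff : ∫ z in B \ Bk, F (s + z) = I - Ik :=
    integral_diff measurableSet_ball hint hsub
  have hIk : ‖Ik‖ ≤ C * μk := by
    apply norm_setIntegral_le_of_norm_le_const measure_ball_lt_top
    · intro z hz
      exact hFb s hs z (le_trans (le_of_lt (mem_ball_zero_iff.mp hz)) (hle.trans hε))
  have hann_meas : (volume (B \ Bk)).toReal = μ - μk := by
    rw [measure_diff hsub measurableSet_ball.nullMeasurableSet measure_ball_lt_top.ne,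
      ENNReal.toReal_sub_of_le (measure_mono hsub) measure_ball_lt_top.ne]
  have hIann : ‖I - Ik‖ ≤ C * (μ - μk) := by
    rw [← hdiff, ← hann_meas]
    apply norm_setIntegral_le_of_norm_le_const
      (lt_of_le_of_lt (measure_mono Set.diff_subset) measure_ball_lt_top)
    · intro z hz
      exact hFb s hs z (le_trans (le_of_lt (mem_ball_zero_iff.mp hz.1)) hε)
  have key : μk⁻¹ • Ik - μ⁻¹ • I = (μk⁻¹ - μ⁻¹) • Ik - μ⁻¹ • (I - Ik) := by
    rw [sub_smul, smul_sub]; abel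
  have hcoef : (0:ℝ) ≤ μk⁻¹ - μ⁻¹ := by
    have := inv_anti₀ hμk_pos hμk_le
    linarith
  have hbound : ‖μk⁻¹ • Ik - μ⁻¹ • I‖ ≤ 2 * C * (1 - μk / μ) := by
    rw [key]
    calc ‖(μk⁻¹ - μ⁻¹) • Ik - μ⁻¹ • (I - Ik)‖
        ≤ ‖(μk⁻¹ - μ⁻¹) • Ik‖ + ‖μ⁻¹ • (I - Ik)‖ := norm_sub_le _ _
      _ = (μk⁻¹ - μ⁻¹) * ‖Ik‖ + μ⁻¹ * ‖I - Ik‖ := by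
          rw [norm_smul, norm_smul, Real.norm_of_nonneg hcoef,
            Real.norm_of_nonneg (inv_nonneg.mpr hμ_pos.le)]
      _ ≤ (μk⁻¹ - μ⁻¹) * (C * μk) + μ⁻¹ * (C * (μ - μk)) := by
          gcongr
      _ = 2 * C * (1 - μk / μ) := by
          field_simp
          ring
  have hratio : μk / μ = (εk / εk1) ^ n := by
    have h1 : volume Bk = ENNReal.ofReal (εk ^ n) * volume (Metric.ball (0 : EuclideanSpace ℝ (Fin n)) 1) := by
      rw [hBk, Measure.addHaar_ball volume 0 hεk.le, finrank_euclideanSpace_fin]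
    have h2 : volume B = ENNReal.ofReal (εk1 ^ n) * volume (Metric.ball (0 : EuclideanSpace ℝ (Fin n)) 1) := by
      rw [hB, Measure.addHaar_ball volume 0 hεk1.le, finrank_euclideanSpace_fin]
    have hu : (0:ℝ) < (volume (Metric.ball (0 : EuclideanSpace ℝ (Fin n)) 1)).toReal :=
      ENNReal.toReal_pos (Metric.measure_ball_pos volume 0 one_pos).ne' measure_ball_lt_top.ne
    have e1 : μk = εk ^ n * (volume (Metric.ball (0 : EuclideanSpace ℝ (Fin n)) 1)).toReal := by
      rw [hμk, h1, ENNReal.toReal_mul, ENNReal.toReal_ofReal (by positivity)]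
    have e2 : μ = εk1 ^ n * (volume (Metric.ball (0 : EuclideanSpace ℝ (Fin n)) 1)).toReal := by
      rw [hμ, h2, ENNReal.toReal_mul, ENNReal.toReal_ofReal (by positivity)]
    rw [e1, e2, div_pow]
    field_simp
  rw [← hratio]
  exact hbound
end
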